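/- Let $\alpha < 0$ and $f \in L^1(\mathbb{R}^n)$ nontrivial and nonnegative. Then $(Mf)^\alpha \in RH_\infty$: there is a constant $C$ such that for every ball $B$ and a.e. $x \in B$, $Mf(x)^\alpha \le C\, \fint_B (Mf)^\alpha$. -/

import Mathlib

open MeasureTheory Metric ENNReal

noncomputable section

/-- We work on `ℝ^n` with the sup metric, so that metric balls are (open) cubes. -/
abbrev Rn (n : ℕ) : Type := Fin n → ℝ

/-- Conjugate exponent of a real number. -/
def rconj (p : ℝ) : ℝ := p / (p - 1)

/-- Conjugate exponent in `ℝ≥0∞`, with the conventions `(∞)' = 1` and `(1)' = ∞`. -/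
def econj (s : ℝ≥0∞) : ℝ≥0∞ :=
  if s = ∞ then 1 else if s = 1 then ∞ else ENNReal.ofReal (rconj s.toReal)

variable {n : ℕ}

/-- Average of `u` over the ball/cube `B(c,r)` (w.r.t. Lebesgue measure). -/
def ballAvg (u : Rn n → ℝ) (c : Rn n) (r : ℝ) : ℝ := ⨍ x in ball c r, u x

/-- Muckenhoupt `A_p` condition with constant `C` (either `p = 1` or `p > 1`). -/
def ApConst (w : Rn n → ℝ) (p C : ℝ) : Prop :=
  (p = 1 ∧ ∀ c : Rn n, ∀ r : ℝ, 0 < r →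
      ∀ᵐ x ∂(volume.restrict (ball c r)), ballAvg w c r ≤ C * w x) ∨
  (1 < p ∧ ∀ c : Rn n, ∀ r : ℝ, 0 < r →
      ballAvg w c r * (ballAvg (fun x => w x ^ (1 - rconj p)) c r) ^ (p - 1) ≤ C)

/-- Muckenhoupt class `A_p`, `1 ≤ p < ∞`. -/
def MemAp (w : Rn n → ℝ) (p : ℝ) : Prop := ∃ C : ℝ, ApConst w p C

/-- `A_p` for an extended exponent; `A_∞` is the union of the `A_p`. -/
def MemApE (w : Rn n → ℝ) (p : ℝ≥0∞) : Prop :=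
  if p = ∞ then ∃ q : ℝ, 1 ≤ q ∧ MemAp w q else MemAp w p.toReal

/-- Reverse Hölder condition `RH_s` with constant `C`; `RH_1` consists of all weights,
and `RH_∞` is the essential supremum condition. -/
def RHConst (w : Rn n → ℝ) (s : ℝ≥0∞) (C : ℝ) : Prop :=
  if s = ∞ then
    ∀ c : Rn n, ∀ r : ℝ, 0 < r →
      ∀ᵐ x ∂(volume.restrict (ball c r)), w x ≤ C * ballAvg w c r
  else
    s = 1 ∨ (1 < s ∧ ∀ c : Rn n, ∀ r : ℝ, 0 < r →
      (ballAvg (fun x => w x ^ s.toReal) c r) ^ (1 / s.toReal) ≤ C * ballAvg w c r)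

/-- Reverse Hölder class `RH_s`, `1 ≤ s ≤ ∞`. -/
def MemRH (w : Rn n → ℝ) (s : ℝ≥0∞) : Prop := ∃ C : ℝ, RHConst w s C

/-- The uncentered Hardy–Littlewood maximal function (over balls/cubes). -/
def maxFn (f : Rn n → ℝ) (x : Rn n) : ℝ≥0∞ :=
  ⨆ (c : Rn n) (r : ℝ) (_ : x ∈ ball c r),
    (∫⁻ y in ball c r, ENNReal.ofReal |f y|) / volume (ball c r)

/-- Real-valued maximal function. -/
def maxFnR (f : Rn n → ℝ) (x : Rn n) : ℝ := (maxFn f x).toReal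

/-- Fefferman–Stein sharp maximal function. -/
def sharpFn (f : Rn n → ℝ) (x : Rn n) : ℝ≥0∞ :=
  ⨆ (c : Rn n) (r : ℝ) (_ : x ∈ ball c r),
    (∫⁻ y in ball c r, ENNReal.ofReal |f y - ballAvg f c r|) / volume (ball c r)

/-- `L^p(w)` norm of an `ℝ≥0∞`-valued function. -/
def wLpE (p : ℝ) (w : Rn n → ℝ) (u : Rn n → ℝ≥0∞) : ℝ≥0∞ :=
  (∫⁻ x, u x ^ p * ENNReal.ofReal (w x)) ^ (1 / p)

/-- `L^p(w)` norm of a real-valued function. -/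
def wLp (p : ℝ) (w u : Rn n → ℝ) : ℝ≥0∞ :=
  wLpE p w (fun x => ENNReal.ofReal |u x|)

/-- weak `L^p(w)` quasinorm. -/
def wWeakLp (p : ℝ) (w u : Rn n → ℝ) : ℝ≥0∞ :=
  ⨆ (lam : ℝ) (_ : 0 < lam),
    ENNReal.ofReal lam * (∫⁻ x in {y | lam < u y}, ENNReal.ofReal (w x)) ^ (1 / p)

/-- `r_w`, the infimum of the `r` for which `w ∈ A_r`. -/
def rW (w : Rn n → ℝ) : ℝ := sInf {r : ℝ | 1 ≤ r ∧ MemAp w r}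

/-- `s_w`, the supremum of the `s > 1` for which `w ∈ RH_s`. -/
def sW (w : Rn n → ℝ) : ℝ≥0∞ := sSup {s : ℝ≥0∞ | 1 < s ∧ MemRH w s}


section CRAux

variable {n : ℕ}

lemma bA_le_maxFn {f : Rn n → ℝ} {c : Rn n} {ρ : ℝ} {x : Rn n} (hx : x ∈ ball c ρ) :
    (∫⁻ y in ball c ρ, ENNReal.ofReal |f y|) / volume (ball c ρ) ≤ maxFn f x :=
  le_iSup₂_of_le c ρ (le_iSup_of_le hx le_rfl)

lemma lsc_maxFn (f : Rn n → ℝ) : LowerSemicontinuous (maxFn f) := by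
  intro x t ht
  simp only [maxFn, lt_iSup_iff] at ht
  obtain ⟨c, ρ, hx, hA⟩ := ht
  filter_upwards [isOpen_ball.mem_nhds hx] with y hy
  exact hA.trans_le (bA_le_maxFn hy)

lemma measurable_maxFn (f : Rn n → ℝ) : Measurable (maxFn f) :=
  (lsc_maxFn f).measurable

lemma vitali_weak {g : Rn n → ℝ≥0∞} {lam : ℝ≥0∞} {E : Set (Rn n)} {R : ℝ}
    (hE : ∀ x ∈ E, ∃ cx ρ, x ∈ ball cx ρ ∧ ρ ≤ R ∧
      lam * volume (ball cx ρ) < ∫⁻ y in ball cx ρ, g y) :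
    lam * volume E ≤ ENNReal.ofReal (4 ^ n) * ∫⁻ y, g y := by
  classical
  choose! cc rr hmem hle hint using hE
  obtain ⟨u, huE, hdisj, hcov⟩ :=
    Vitali.exists_disjoint_subfamily_covering_enlargement_closedBall E cc rr R hle 4 (by norm_num)
  have hρpos : ∀ b ∈ u, 0 < rr b := fun b hb => nonempty_ball.mp ⟨b, hmem b (huE hb)⟩
  have hcount : u.Countable := by
    apply hdisj.countable_of_nonempty_interior
    intro b hb
    exact ⟨b, ball_subset_interior_closedBall (hmem b (huE hb))⟩
  have hEsub : E ⊆ ⋃ b ∈ u, closedBall (cc b) (4 * rr b) := by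
    intro x hx
    obtain ⟨b, hb, hsub⟩ := hcov x hx
    exact Set.mem_biUnion hb (hsub (ball_subset_closedBall (hmem x hx)))
  have hval : ∀ b ∈ u, volume (closedBall (cc b) (4 * rr b))
      = ENNReal.ofReal (4 ^ n) * volume (ball (cc b) (rr b)) := by
    intro b hb
    have h0 : (0:ℝ) < rr b := hρpos b hb
    rw [Real.volume_pi_closedBall _ (by positivity), Real.volume_pi_ball _ h0,
      ← ENNReal.ofReal_mul (by positivity)]
    congr 1
    simp only [Fintype.card_fin]
    rw [show 2 * (4 * rr b) = 4 * (2 * rr b) by ring, mul_pow]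
  calc lam * volume E ≤ lam * ∑' b : u, volume (closedBall (cc b) (4 * rr b)) := by
        gcongr
        exact (measure_mono hEsub).trans (measure_biUnion_le volume hcount _)
    _ = lam * ∑' b : u, (ENNReal.ofReal (4 ^ n) * volume (ball (cc b) (rr b))) := by
        congr 1; exact tsum_congr fun b => hval b b.2
    _ = ENNReal.ofReal (4 ^ n) * ∑' b : u, (lam * volume (ball (cc b) (rr b))) := by
        rw [ENNReal.tsum_mul_left, ENNReal.tsum_mul_left, ← mul_assoc, ← mul_assoc,
          mul_comm lam]
    _ ≤ ENNReal.ofReal (4 ^ n) * ∑' b : u, ∫⁻ y in ball (cc b) (rr b), g y := by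
        gcongr with b
        exact (hint b (huE b.2)).le
    _ = ENNReal.ofReal (4 ^ n) * ∫⁻ y in ⋃ b ∈ u, ball (cc b) (rr b), g y := by
        congr 1
        exact (lintegral_biUnion hcount (fun b _ => measurableSet_ball)
          (hdisj.mono fun b => ball_subset_closedBall) g).symm
    _ ≤ ENNReal.ofReal (4 ^ n) * ∫⁻ y, g y := by
        gcongr
        exact Measure.restrict_le_self

end CRAux

/-- For `α < 0` and nontrivial nonnegative `f ∈ L¹`, the weight `(Mf)^α` is in `RH_∞`:
there is `C` with `Mf(x)^α ≤ C ⨍_B (Mf)^α` for every ball `B` and a.e. `x ∈ B`. -/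
theorem stmt5 {n : ℕ} (f : Rn n → ℝ) (hf0 : ∀ x, 0 ≤ f x)
    (hfi : MeasureTheory.Integrable f) (hfne : ¬ f =ᵐ[volume] 0)
    (α : ℝ) (hα : α < 0) :
    ∃ C : ℝ, 0 < C ∧ ∀ c : Rn n, ∀ r : ℝ, 0 < r →
      ∀ᵐ x ∂(volume.restrict (ball c r)),
        maxFnR f x ^ α ≤ C * ⨍ y in ball c r, maxFnR f y ^ α := by
  classical
  have hFae : AEMeasurable (fun y => ENNReal.ofReal |f y|) volume := by
    have h1 : AEMeasurable (fun y => |f y|) volume := by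
      simpa [Real.norm_eq_abs] using hfi.1.norm.aemeasurable
    exact h1.ennreal_ofReal
  set I : ℝ≥0∞ := ∫⁻ y, ENNReal.ofReal |f y| with hIdef
  have hItop : I ≠ ∞ := by
    have h := hfi.2
    rw [HasFiniteIntegral] at h
    simp only [Real.enorm_eq_ofReal_abs] at h
    exact h.ne
  have hI0 : I ≠ 0 := by
    intro h
    apply hfne
    have h2 := (lintegral_eq_zero_iff' hFae).mp h
    filter_upwards [h2] with y hy
    have : ENNReal.ofReal |f y| = 0 := hy
    rw [ENNReal.ofReal_eq_zero, abs_nonpos_iff] at this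
    simpa using this
  set K : ℝ := 2 * 12 ^ n with hKdef
  have hKpos : (0:ℝ) < K := by positivity
  have h3K : (3:ℝ) ^ n ≤ K := by
    have h1 : (3:ℝ) ^ n ≤ 12 ^ n :=
      pow_le_pow_left₀ (by norm_num) (by norm_num) n
    nlinarith [pow_pos (show (0:ℝ) < 12 by norm_num) n]
  refine ⟨2 * K ^ (-α), by positivity, ?_⟩
  intro c r hr
  have hBpos : volume (ball c r) ≠ 0 := (measure_ball_pos volume c hr).ne'
  have hBtop : volume (ball c r) ≠ ∞ := measure_ball_lt_top.ne
  -- the supremum of averages over concentric balls containing B(c,r)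
  set m : ℝ≥0∞ := ⨆ (ρ : ℝ) (_ : r ≤ ρ),
      (∫⁻ y in ball c ρ, ENNReal.ofReal |f y|) / volume (ball c ρ) with hmdef
  have hmle : ∀ x ∈ ball c r, m ≤ maxFn f x := fun x hx =>
    iSup₂_le fun ρ hρ => bA_le_maxFn (ball_subset_ball hρ hx)
  have hmtop : m ≠ ∞ := by
    have h1 : m ≤ I / volume (ball c r) := iSup₂_le fun ρ hρ => by
      refine ENNReal.div_le_div ?_ (measure_mono (ball_subset_ball hρ))
      exact setLIntegral_le_lintegral _ _
    exact (h1.trans_lt (ENNReal.div_lt_top hItop hBpos)).ne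
  have hm0 : m ≠ 0 := by
    intro h0
    refine hI0 ?_
    have hcover : (Set.univ : Set (Rn n)) ⊆ ⋃ k : ℕ, ball c (r + k) := by
      intro x _
      simp only [Set.mem_iUnion, mem_ball]
      obtain ⟨k, hk⟩ := exists_nat_gt (dist x c)
      exact ⟨k, by linarith⟩
    have hzero : ∀ k : ℕ, (∫⁻ y in ball c (r + (k:ℝ)), ENNReal.ofReal |f y|) = 0 := by
      intro k
      have hk : r ≤ r + (k:ℝ) := le_add_of_nonneg_right k.cast_nonneg
      have hle : (∫⁻ y in ball c (r + (k:ℝ)), ENNReal.ofReal |f y|)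
          / volume (ball c (r + (k:ℝ))) ≤ m := le_iSup₂_of_le (r + (k:ℝ)) hk le_rfl
      rw [h0, le_zero_iff] at hle
      rcases ENNReal.div_eq_zero_iff.mp hle with h | h
      · exact h
      · exact absurd h measure_ball_lt_top.ne
    have hle0 : I ≤ 0 :=
      calc I = ∫⁻ y in Set.univ, ENNReal.ofReal |f y| := (setLIntegral_univ _).symm
      _ ≤ ∫⁻ y in ⋃ k : ℕ, ball c (r + (k:ℝ)), ENNReal.ofReal |f y| :=
          lintegral_mono_set hcover
      _ ≤ ∑' k : ℕ, ∫⁻ y in ball c (r + (k:ℝ)), ENNReal.ofReal |f y| :=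
          lintegral_iUnion_le _ _
      _ = 0 := by simp [hzero]
    exact le_antisymm hle0 (by simp)
  set lam : ℝ≥0∞ := ENNReal.ofReal K * m with hlamdef
  have hK0' : ENNReal.ofReal K ≠ 0 := (ENNReal.ofReal_pos.mpr hKpos).ne'
  have hlam0 : lam ≠ 0 := mul_ne_zero hK0' hm0
  have hlamtop : lam ≠ ∞ := ENNReal.mul_ne_top ENNReal.ofReal_ne_top hmtop
  set E : Set (Rn n) := {x | x ∈ ball c r ∧ lam < maxFn f x} with hEdef
  have hEmeas : MeasurableSet E := by
    have hEeq : E = ball c r ∩ (maxFn f) ⁻¹' (Set.Ioi lam) := rfl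
    rw [hEeq]
    exact measurableSet_ball.inter ((measurable_maxFn f) measurableSet_Ioi)
  set g : Rn n → ℝ≥0∞ := (ball c (3 * r)).indicator (fun y => ENNReal.ofReal |f y|)
    with hgdef
  -- every point of E admits a small ball witnessing the largeness of the maximal function
  have hwit : ∀ x ∈ E, ∃ cx ρ, x ∈ ball cx ρ ∧ ρ ≤ r ∧
      lam * volume (ball cx ρ) < ∫⁻ y in ball cx ρ, g y := by
    rintro x ⟨hxB, hxM⟩
    rw [maxFn] at hxM
    simp only [lt_iSup_iff] at hxM
    obtain ⟨c', ρ, hx', hA⟩ := hxM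
    have hρ0 : 0 < ρ := nonempty_ball.mp ⟨x, hx'⟩
    have h1 : dist x c' < ρ := mem_ball.mp hx'
    have h3 : dist x c < r := mem_ball.mp hxB
    have hρr : ρ < r := by
      by_contra hge
      push_neg at hge
      have hsub : ball c' ρ ⊆ ball c (3 * ρ) := by
        intro y hy
        have hy1 : dist y c' < ρ := mem_ball.mp hy
        rw [mem_ball]
        calc dist y c ≤ dist y c' + dist c' c := dist_triangle _ _ _
          _ ≤ dist y c' + (dist c' x + dist x c) := by linarith [dist_triangle c' x c]
          _ < ρ + (ρ + r) := by rw [dist_comm c' x]; linarith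
          _ ≤ 3 * ρ := by linarith
      have h3n0 : ENNReal.ofReal ((3:ℝ) ^ n) ≠ 0 :=
        (ENNReal.ofReal_pos.mpr (by positivity)).ne'
      have h3ntop : ENNReal.ofReal ((3:ℝ) ^ n) ≠ ∞ := ENNReal.ofReal_ne_top
      have hvol3 : volume (ball c (3 * ρ)) = ENNReal.ofReal ((3:ℝ) ^ n) * volume (ball c' ρ) := by
        rw [Real.volume_pi_ball _ (by positivity), Real.volume_pi_ball _ hρ0,
          ← ENNReal.ofReal_mul (by positivity)]
        congr 1
        simp only [Fintype.card_fin]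
        rw [show 2 * (3 * ρ) = 3 * (2 * ρ) by ring, mul_pow]
      have hm3 : (∫⁻ y in ball c (3 * ρ), ENNReal.ofReal |f y|) / volume (ball c (3 * ρ)) ≤ m :=
        le_iSup₂_of_le (3 * ρ) (by linarith) le_rfl
      have hA' : (∫⁻ y in ball c' ρ, ENNReal.ofReal |f y|) / volume (ball c' ρ)
          ≤ ENNReal.ofReal ((3:ℝ) ^ n) * m := by
        calc (∫⁻ y in ball c' ρ, ENNReal.ofReal |f y|) / volume (ball c' ρ)
            ≤ (∫⁻ y in ball c (3 * ρ), ENNReal.ofReal |f y|) / volume (ball c' ρ) :=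
              ENNReal.div_le_div (lintegral_mono_set hsub) le_rfl
          _ = ENNReal.ofReal ((3:ℝ) ^ n) *
              ((∫⁻ y in ball c (3 * ρ), ENNReal.ofReal |f y|) / volume (ball c (3 * ρ))) := by
              rw [hvol3, ← mul_div_assoc]
              exact (ENNReal.mul_div_mul_left _ _ h3n0 h3ntop).symm
          _ ≤ ENNReal.ofReal ((3:ℝ) ^ n) * m := by gcongr
      have hcontr : lam < lam := by
        refine hA.trans_le (hA'.trans ?_)
        rw [hlamdef]
        gcongr
        all_goals exact ENNReal.ofReal_le_ofReal h3K
      exact absurd hcontr (lt_irrefl _)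
    refine ⟨c', ρ, hx', hρr.le, ?_⟩
    have hsub3 : ball c' ρ ⊆ ball c (3 * r) := by
      intro y hy
      have hy1 : dist y c' < ρ := mem_ball.mp hy
      rw [mem_ball]
      calc dist y c ≤ dist y c' + dist c' c := dist_triangle _ _ _
        _ ≤ dist y c' + (dist c' x + dist x c) := by linarith [dist_triangle c' x c]
        _ < ρ + (ρ + r) := by rw [dist_comm c' x]; linarith
        _ ≤ 3 * r := by linarith
    have hgeq : (∫⁻ y in ball c' ρ, g y) = ∫⁻ y in ball c' ρ, ENNReal.ofReal |f y| := by
      refine setLIntegral_congr_fun measurableSet_ball (fun y hy => ?_)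
      exact Set.indicator_of_mem (hsub3 hy) _
    rw [hgeq]
    exact ENNReal.mul_lt_of_lt_div hA
  -- weak-type bound via the Vitali covering lemma
  have hweak := vitali_weak hwit
  have hgint : (∫⁻ y, g y) = ∫⁻ y in ball c (3 * r), ENNReal.ofReal |f y| :=
    lintegral_indicator measurableSet_ball _
  have hvol3r : volume (ball c (3 * r)) = ENNReal.ofReal ((3:ℝ) ^ n) * volume (ball c r) := by
    rw [Real.volume_pi_ball _ (by positivity), Real.volume_pi_ball _ hr,
      ← ENNReal.ofReal_mul (by positivity)]
    congr 1
    simp only [Fintype.card_fin]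
    rw [show 2 * (3 * r) = 3 * (2 * r) by ring, mul_pow]
  have h3r : (∫⁻ y in ball c (3 * r), ENNReal.ofReal |f y|)
      ≤ ENNReal.ofReal ((3:ℝ) ^ n) * volume (ball c r) * m := by
    have hm3 : (∫⁻ y in ball c (3 * r), ENNReal.ofReal |f y|) / volume (ball c (3 * r)) ≤ m :=
      le_iSup₂_of_le (3 * r) (by linarith) le_rfl
    have h2 := (ENNReal.div_le_iff_le_mul
      (Or.inl (measure_ball_pos volume c (by linarith : (0:ℝ) < 3 * r)).ne')
      (Or.inl measure_ball_lt_top.ne)).mp hm3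
    rw [hvol3r] at h2
    calc (∫⁻ y in ball c (3 * r), ENNReal.ofReal |f y|)
        ≤ m * (ENNReal.ofReal ((3:ℝ) ^ n) * volume (ball c r)) := h2
      _ = ENNReal.ofReal ((3:ℝ) ^ n) * volume (ball c r) * m := by ring
  have h43 : ENNReal.ofReal ((4:ℝ) ^ n) * ENNReal.ofReal ((3:ℝ) ^ n)
      = ENNReal.ofReal ((12:ℝ) ^ n) := by
    rw [← ENNReal.ofReal_mul (by positivity), ← mul_pow]
    norm_num
  have hchain : lam * volume E ≤ ENNReal.ofReal ((12:ℝ) ^ n) * m * volume (ball c r) := by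
    calc lam * volume E ≤ ENNReal.ofReal ((4:ℝ) ^ n) *
          (ENNReal.ofReal ((3:ℝ) ^ n) * volume (ball c r) * m) := by
          refine hweak.trans ?_
          rw [hgint]
          gcongr
      _ = ENNReal.ofReal ((4:ℝ) ^ n) * ENNReal.ofReal ((3:ℝ) ^ n) * m * volume (ball c r) := by
          ring
      _ = ENNReal.ofReal ((12:ℝ) ^ n) * m * volume (ball c r) := by rw [h43]
  set Q : ℝ≥0∞ := ENNReal.ofReal ((12:ℝ) ^ n) * m with hQdef
  have hQ0 : Q ≠ 0 := mul_ne_zero (ENNReal.ofReal_pos.mpr (by positivity)).ne' hm0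
  have hQtop : Q ≠ ∞ := ENNReal.mul_ne_top ENNReal.ofReal_ne_top hmtop
  have hlamQ : lam = 2 * Q := by
    rw [hlamdef, hQdef, hKdef, ENNReal.ofReal_mul (by norm_num), ← mul_assoc]
    norm_num
  have hEhalf : volume E ≤ volume (ball c r) / 2 := by
    rw [ENNReal.le_div_iff_mul_le (Or.inl two_ne_zero) (Or.inl ENNReal.ofNat_ne_top)]
    refine (ENNReal.mul_le_mul_iff_right hQ0 hQtop).mp ?_
    calc Q * (volume E * 2) = lam * volume E := by rw [hlamQ]; ring
      _ ≤ Q * volume (ball c r) := hchain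
  have hwmeas : Measurable (fun x => maxFnR f x ^ α) := by
    have h1 : Measurable (maxFnR f) := (measurable_maxFn f).ennreal_toReal
    exact h1.pow_const α
  have hw0 : ∀ x, (0:ℝ) ≤ maxFnR f x ^ α := fun x =>
    Real.rpow_nonneg ENNReal.toReal_nonneg α
  have hmR : 0 < m.toReal := ENNReal.toReal_pos hm0 hmtop
  have hbound : ∀ x ∈ ball c r, maxFnR f x ^ α ≤ m.toReal ^ α := by
    intro x hx
    by_cases hfin : maxFn f x = ∞
    · have h1 : maxFnR f x = 0 := by simp [maxFnR, hfin]
      rw [h1, Real.zero_rpow hα.ne]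
      exact Real.rpow_nonneg ENNReal.toReal_nonneg α
    · have h1 : m.toReal ≤ maxFnR f x :=
        (ENNReal.toReal_le_toReal hmtop hfin).mpr (hmle x hx)
      exact Real.rpow_le_rpow_of_nonpos hmR h1 hα.le
  have hIntOn : IntegrableOn (fun x => maxFnR f x ^ α) (ball c r) volume := by
    refine Integrable.mono' (g := fun _ => m.toReal ^ α)
      (integrableOn_const measure_ball_lt_top.ne)
      hwmeas.aestronglyMeasurable ?_
    refine (ae_restrict_iff' measurableSet_ball).2 (ae_of_all _ fun x hx => ?_)
    rw [Real.norm_of_nonneg (hw0 x)]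
    exact hbound x hx
  set G : Set (Rn n) := ball c r \ E with hGdef
  have hGmeas : MeasurableSet G := measurableSet_ball.diff hEmeas
  have hGt : volume G ≠ ∞ := ((measure_mono Set.diff_subset).trans_lt measure_ball_lt_top).ne
  have hGvol : volume (ball c r) / 2 ≤ volume G := by
    have hEB : E ⊆ ball c r := fun x hx => hx.1
    have hEt : volume E ≠ ∞ := ((measure_mono hEB).trans_lt measure_ball_lt_top).ne
    rw [hGdef, measure_diff hEB hEmeas.nullMeasurableSet hEt]
    refine ENNReal.le_sub_of_add_le_right hEt ?_
    calc volume (ball c r) / 2 + volume E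
        ≤ volume (ball c r) / 2 + volume (ball c r) / 2 := add_le_add le_rfl hEhalf
      _ = volume (ball c r) := ENNReal.add_halves _
  have hlamR : 0 < lam.toReal := ENNReal.toReal_pos hlam0 hlamtop
  have hGlb : ∀ x ∈ G, lam.toReal ^ α ≤ maxFnR f x ^ α := by
    intro x hx
    obtain ⟨hxB, hxE⟩ := hx
    have hle : maxFn f x ≤ lam := by
      by_contra hlt
      push_neg at hlt
      exact hxE ⟨hxB, hlt⟩
    have hfin : maxFn f x ≠ ∞ := (hle.trans_lt (lt_top_iff_ne_top.mpr hlamtop)).ne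
    have h1 : maxFnR f x ≤ lam.toReal := (ENNReal.toReal_le_toReal hfin hlamtop).mpr hle
    have h2 : 0 < maxFnR f x := ENNReal.toReal_pos
      (lt_of_lt_of_le (pos_iff_ne_zero.mpr hm0) (hmle x hxB)).ne' hfin
    exact Real.rpow_le_rpow_of_nonpos h2 h1 hα.le
  have hIntG : IntegrableOn (fun x => maxFnR f x ^ α) G volume :=
    hIntOn.mono_set Set.diff_subset
  have hlow : lam.toReal ^ α * (volume G).toReal ≤ ∫ x in G, maxFnR f x ^ α :=
    setIntegral_ge_of_const_le_real hGmeas hGt hGlb hIntG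
  have hmono : (∫ x in G, maxFnR f x ^ α) ≤ ∫ x in ball c r, maxFnR f x ^ α :=
    setIntegral_mono_set hIntOn (ae_of_all _ hw0)
      (HasSubset.Subset.eventuallyLE Set.diff_subset)
  have hvolR : 0 < (volume (ball c r)).toReal :=
    ENNReal.toReal_pos hBpos hBtop
  have havg : lam.toReal ^ α / 2 ≤ ⨍ y in ball c r, maxFnR f y ^ α := by
    rw [setAverage_eq, smul_eq_mul]
    have hGR : (volume (ball c r)).toReal / 2 ≤ (volume G).toReal := by
      have h4 := ENNReal.toReal_mono hGt hGvol
      rwa [ENNReal.toReal_div, ENNReal.toReal_ofNat] at h4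
    have h3 : lam.toReal ^ α * ((volume (ball c r)).toReal / 2)
        ≤ ∫ x in ball c r, maxFnR f x ^ α := by
      calc lam.toReal ^ α * ((volume (ball c r)).toReal / 2)
          ≤ lam.toReal ^ α * (volume G).toReal :=
            mul_le_mul_of_nonneg_left hGR (Real.rpow_nonneg hlamR.le α)
        _ ≤ ∫ x in G, maxFnR f x ^ α := hlow
        _ ≤ ∫ x in ball c r, maxFnR f x ^ α := hmono
    have heq : lam.toReal ^ α / 2
        = (volume (ball c r)).toReal⁻¹ * (lam.toReal ^ α * ((volume (ball c r)).toReal / 2)) := by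
      field_simp
    rw [heq]
    exact mul_le_mul_of_nonneg_left h3 (inv_nonneg.mpr hvolR.le)
  refine (ae_restrict_iff' measurableSet_ball).2 (ae_of_all _ fun x hx => ?_)
  have hlamval : lam.toReal = K * m.toReal := by
    rw [hlamdef, ENNReal.toReal_mul, ENNReal.toReal_ofReal hKpos.le]
  have hKinv : K ^ (-α) * K ^ α = 1 := by
    rw [← Real.rpow_add hKpos]
    simp
  have hKey : m.toReal ^ α ≤ 2 * K ^ (-α) * ⨍ y in ball c r, maxFnR f y ^ α := by
    calc m.toReal ^ α = (K ^ (-α) * K ^ α) * m.toReal ^ α := by rw [hKinv, one_mul]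
      _ = 2 * K ^ (-α) * ((K * m.toReal) ^ α / 2) := by
          rw [Real.mul_rpow hKpos.le hmR.le]
          ring
      _ = 2 * K ^ (-α) * (lam.toReal ^ α / 2) := by rw [hlamval]
      _ ≤ 2 * K ^ (-α) * ⨍ y in ball c r, maxFnR f y ^ α := by
          refine mul_le_mul_of_nonneg_left havg ?_
          have h5 := Real.rpow_nonneg hKpos.le (-α)
          linarith
  exact (hbound x hx).trans hKey

end
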